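/- Every Hermitian matrix A ∈ M_k ⊗ M_m admits a Hermitian Schmidt decomposition: A = Σ_{i=1}^n λ_i γ_i ⊗ δ_i where λ_i > 0 are real, {γ_1,...,γ_n} ⊂ M_k and {δ_1,...,δ_n} ⊂ M_m are orthonormal sets of Hermitian matrices with respect to the trace inner product ⟨C,D⟩ = tr(C D*). -/

import Mathlib

open Matrix Kronecker Complex LinearMap

local notation "⟪" x ", " y "⟫" => inner (𝕜 := ℝ) x y

noncomputable def sC : ℂ := (((Real.sqrt 2)⁻¹ : ℝ) : ℂ)

lemma sC_conj : (starRingEnd ℂ) sC = sC := Complex.conj_ofReal _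

lemma sC_star : star sC = sC := sC_conj

lemma sC_mul_sC : sC * sC = (2 : ℂ)⁻¹ := by
  unfold sC
  rw [← Complex.ofReal_mul, ← mul_inv, Real.mul_self_sqrt (le_of_lt two_pos)]
  norm_num

lemma trace_std {n : ℕ} (a b c d : Fin n) :
    Matrix.trace (Matrix.single a b (1:ℂ) * Matrix.single c d 1)
      = if b = c ∧ a = d then 1 else 0 := by
  classical
  simp only [Matrix.trace, Matrix.diag, Matrix.mul_apply, Matrix.single, Matrix.of_apply]
  by_cases hbc : b = c
  · by_cases had : a = d
    · subst hbc; subst had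
      simp [Finset.sum_ite_eq, ite_and]
    · simp only [hbc, had, and_true, and_false, if_false, if_true]
      refine Eq.trans (Finset.sum_eq_zero fun x _ => Finset.sum_eq_zero fun y _ => ?_) (by simp)
      split_ifs <;> simp_all
  · simp only [hbc, false_and, if_false]
    refine Eq.trans (Finset.sum_eq_zero fun x _ => Finset.sum_eq_zero fun y _ => ?_) (by simp)
    split_ifs <;> simp_all

lemma stdBasis_conjTranspose {n : ℕ} (a b : Fin n) :
    (Matrix.single a b (1:ℂ))ᴴ = Matrix.single b a 1 := by
  ext i j
  simp [conjTranspose_apply, Matrix.single, and_comm]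

noncomputable def hermBasis (n : ℕ) : Fin n × Fin n → Matrix (Fin n) (Fin n) ℂ :=
  fun p =>
    if p.1 = p.2 then Matrix.single p.1 p.2 1
    else if p.1 < p.2 then sC • (Matrix.single p.1 p.2 1 + Matrix.single p.2 p.1 1)
    else sC • (Complex.I • Matrix.single p.1 p.2 1 - Complex.I • Matrix.single p.2 p.1 1)

lemma hermBasis_isHermitian (n : ℕ) (p : Fin n × Fin n) : (hermBasis n p).IsHermitian := by
  obtain ⟨a, b⟩ := p
  unfold hermBasis Matrix.IsHermitian
  dsimp only
  split_ifs with h1 h2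
  · rw [stdBasis_conjTranspose]; rw [h1]
  · rw [conjTranspose_smul, conjTranspose_add, stdBasis_conjTranspose,
      stdBasis_conjTranspose, sC_star, add_comm]
  · rw [conjTranspose_smul, conjTranspose_sub, conjTranspose_smul, conjTranspose_smul,
      stdBasis_conjTranspose, stdBasis_conjTranspose, sC_star, Complex.star_def, Complex.conj_I]
    rw [neg_smul, neg_smul, sub_neg_eq_add, neg_add_eq_sub]

lemma hermBasis_trace (n : ℕ) (p q : Fin n × Fin n) :
    Matrix.trace (hermBasis n p * (hermBasis n q)ᴴ) = if p = q then 1 else 0 := by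
  rw [(hermBasis_isHermitian n q)]
  obtain ⟨a, b⟩ := p; obtain ⟨c, d⟩ := q
  unfold hermBasis
  dsimp only
  split_ifs with h1 h2 h3 h3 h4 <;>
    simp only [Matrix.add_mul, Matrix.mul_add, Matrix.sub_mul, Matrix.mul_sub,
      smul_mul_assoc, mul_smul_comm, trace_add, trace_sub, trace_smul, smul_eq_mul,
      trace_std, Prod.mk.injEq, smul_sub, smul_add] <;>
    split_ifs <;>
    first
      | (simp_all [Prod.mk.injEq, sC_mul_sC, Complex.I_mul_I]; done)
      | omega
      | (norm_num; done)
      | (simp_all [Prod.mk.injEq, sC_mul_sC, Complex.I_mul_I]; omega)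
      | (simp_all [Prod.mk.injEq, sC_mul_sC, Complex.I_mul_I]; norm_num; done)
      | (simp_all [Prod.mk.injEq]; ring_nf; simp_all [sq, sC_mul_sC, Complex.I_mul_I]; norm_num; done)
      | (simp_all [Prod.mk.injEq]; ring_nf; simp_all [sq, sC_mul_sC, Complex.I_mul_I]; done)

noncomputable def matEquiv (I : Type*) [Fintype I] [DecidableEq I] :
    Matrix I I ℂ ≃ₗ[ℂ] EuclideanSpace ℂ (I × I) :=
  (LinearEquiv.curry ℂ ℂ I I).symm.trans (WithLp.linearEquiv 2 ℂ (I × I → ℂ)).symm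

lemma matEquiv_apply {I : Type*} [Fintype I] [DecidableEq I] (M : Matrix I I ℂ) (p : I × I) :
    matEquiv I M p = M p.1 p.2 := rfl

lemma inner_matEquiv {I : Type*} [Fintype I] [DecidableEq I] (C D : Matrix I I ℂ) :
    inner ℂ (matEquiv I D) (matEquiv I C) = Matrix.trace (C * Dᴴ) := by
  simp only [PiLp.inner_apply, RCLike.inner_apply, matEquiv_apply, Matrix.trace,
    Matrix.diag, Matrix.mul_apply, conjTranspose_apply]
  rw [Fintype.sum_prod_type]
  exact Finset.sum_congr rfl fun i _ => Finset.sum_congr rfl fun j _ => by rw [Complex.star_def]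

lemma orthonormal_expansion {E : Type*} [NormedAddCommGroup E] [InnerProductSpace ℂ E]
    [FiniteDimensional ℂ E] {ι : Type*} [Fintype ι] {v : ι → E} (hv : Orthonormal ℂ v)
    (hc : Fintype.card ι = Module.finrank ℂ E) (x : E) :
    x = ∑ i, (inner ℂ (v i) x : ℂ) • v i := by
  have hsp : ⊤ ≤ Submodule.span ℂ (Set.range v) :=
    (hv.linearIndependent.span_eq_top_of_card_eq_finrank' hc).ge
  let b : OrthonormalBasis ι ℂ E := OrthonormalBasis.mk hv hsp
  have := b.sum_repr' x
  simp only [b, OrthonormalBasis.coe_mk] at this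
  exact this.symm

lemma real_svd {E F : Type*} [NormedAddCommGroup E] [InnerProductSpace ℝ E]
    [FiniteDimensional ℝ E] [NormedAddCommGroup F] [InnerProductSpace ℝ F]
    [FiniteDimensional ℝ F] (T : E →ₗ[ℝ] F) :
    ∃ (n : ℕ) (lam : Fin n → ℝ) (u : Fin n → F) (v : Fin n → E),
      (∀ i, 0 < lam i) ∧ Orthonormal ℝ u ∧ Orthonormal ℝ v ∧
      ∀ x, T x = ∑ i, (lam i * ⟪v i, x⟫) • u i := by
  classical
  have hS : (adjoint T ∘ₗ T).IsSymmetric := by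
    intro x y
    simp only [LinearMap.comp_apply, LinearMap.adjoint_inner_left, LinearMap.adjoint_inner_right]
  let v0 := hS.eigenvectorBasis rfl
  let μ := hS.eigenvalues rfl
  have hμv : ∀ i, (adjoint T ∘ₗ T) (v0 i) = (μ i : ℝ) • v0 i := fun i =>
    hS.apply_eigenvectorBasis rfl i
  have hinner : ∀ i j, ⟪T (v0 i), T (v0 j)⟫ = μ i * if i = j then 1 else 0 := by
    intro i j
    rw [← LinearMap.adjoint_inner_left, ← LinearMap.comp_apply, hμv i, inner_smul_left]
    rw [orthonormal_iff_ite.mp v0.orthonormal i j]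
    simp
  have hTnorm : ∀ i, ⟪T (v0 i), T (v0 i)⟫ = μ i := fun i => by rw [hinner i i]; simp
  have hμnonneg : ∀ i, 0 ≤ μ i := fun i => by
    rw [← hTnorm i]; exact real_inner_self_nonneg
  have hT0 : ∀ i, μ i = 0 → T (v0 i) = 0 := fun i hi => by
    have := hTnorm i
    rw [hi] at this
    exact inner_self_eq_zero.mp this
  let J := {i // μ i ≠ 0}
  let e : Fin (Fintype.card J) ≃ J := (Fintype.equivFin J).symm
  have hμpos : ∀ (j : J), 0 < μ j := fun j => lt_of_le_of_ne (hμnonneg j) (Ne.symm j.2)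
  refine ⟨Fintype.card J, fun i => Real.sqrt (μ (e i)), fun i => (Real.sqrt (μ (e i)))⁻¹ • T (v0 (e i)),
    fun i => v0 (e i), fun i => Real.sqrt_pos.mpr (hμpos (e i)), ?_, ?_, ?_⟩
  · rw [orthonormal_iff_ite]
    intro i j
    rw [inner_smul_left, inner_smul_right, hinner]
    have hei : ((e i : J) : Fin (Module.finrank ℝ E)) = ((e j : J) : Fin (Module.finrank ℝ E)) ↔ i = j :=
      ⟨fun h => e.injective (Subtype.ext h), fun h => by subst h; rfl⟩
    by_cases hij : i = j
    · subst hij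
      simp only [if_pos rfl, if_pos (hei.mpr rfl)]
      have h1 : Real.sqrt (μ (e i)) * Real.sqrt (μ (e i)) = μ (e i) :=
        Real.mul_self_sqrt (hμnonneg _)
      have h2 : (0:ℝ) < Real.sqrt (μ (e i)) := Real.sqrt_pos.mpr (hμpos (e i))
      rw [if_pos trivial, mul_one, starRingEnd_apply, star_trivial, ← h1]
      field_simp
      rw [Real.sqrt_sq h2.le]
    · rw [if_neg hij, if_neg (fun h => hij (hei.mp h))]
      ring
  · exact v0.orthonormal.comp (fun i => ((e i : J) : Fin _))
      (fun a b h => e.injective (Subtype.ext h))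
  · intro x
    have hexp : T x = ∑ i, ⟪v0 i, x⟫ • T (v0 i) := by
      conv_lhs => rw [← v0.sum_repr' x]
      rw [map_sum]
      exact Finset.sum_congr rfl fun i _ => by rw [T.map_smul]
    rw [hexp]
    have hfil : ∑ i ∈ Finset.univ.filter (fun i => μ i ≠ 0), (⟪v0 i, x⟫ • T (v0 i)) =
        ∑ i, ⟪v0 i, x⟫ • T (v0 i) :=
      Finset.sum_filter_of_ne (fun i _ hne h0 => hne (by rw [hT0 i h0, smul_zero]))
    rw [← hfil]
    have hsub : ∑ i ∈ Finset.univ.filter (fun i => μ i ≠ 0), (⟪v0 i, x⟫ • T (v0 i)) =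
        ∑ j : J, ⟪v0 (j : Fin (Module.finrank ℝ E)), x⟫ • T (v0 (j : Fin (Module.finrank ℝ E))) :=
      Finset.sum_subtype _ (fun i => by simp) _
    rw [hsub, ← Equiv.sum_comp e
      (fun j : J => ⟪v0 (j : Fin (Module.finrank ℝ E)), x⟫ • T (v0 (j : Fin (Module.finrank ℝ E))))]
    refine Finset.sum_congr rfl fun i _ => ?_
    have h2 : (0:ℝ) < Real.sqrt (μ (e i)) := Real.sqrt_pos.mpr (hμpos (e i))
    rw [smul_smul]
    congr 1
    rw [mul_comm (Real.sqrt _) _, mul_assoc, mul_inv_cancel₀ (ne_of_gt h2), mul_one]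

lemma kronecker_conjTranspose' {I J : Type*} [Fintype I] [Fintype J]
    (X : Matrix I I ℂ) (Y : Matrix J J ℂ) : (X ⊗ₖ Y)ᴴ = Xᴴ ⊗ₖ Yᴴ := by
  ext ⟨i1, i2⟩ ⟨j1, j2⟩
  simp [Matrix.kroneckerMap_apply, Matrix.conjTranspose_apply, star_mul']

theorem stmt10 {k m : ℕ} (A : Matrix (Fin k × Fin m) (Fin k × Fin m) ℂ)
    (hA : A.IsHermitian) :
    ∃ (n : ℕ) (lam : Fin n → ℝ) (γ : Fin n → Matrix (Fin k) (Fin k) ℂ)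
      (δ : Fin n → Matrix (Fin m) (Fin m) ℂ),
      (∀ i, 0 < lam i) ∧
      (∀ i, (γ i).IsHermitian) ∧ (∀ i, (δ i).IsHermitian) ∧
      (∀ i j, Matrix.trace (γ i * (γ j)ᴴ) = if i = j then 1 else 0) ∧
      (∀ i j, Matrix.trace (δ i * (δ j)ᴴ) = if i = j then 1 else 0) ∧
      A = ∑ i, (lam i : ℂ) • (γ i ⊗ₖ δ i) := by
  classical
  set G : (Fin k × Fin k) × (Fin m × Fin m) → Matrix (Fin k × Fin m) (Fin k × Fin m) ℂ :=
    fun p => hermBasis k p.1 ⊗ₖ hermBasis m p.2 with hG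
  have hGherm : ∀ p, (G p).IsHermitian := by
    intro p
    unfold G
    rw [Matrix.IsHermitian, kronecker_conjTranspose',
      (hermBasis_isHermitian k p.1), (hermBasis_isHermitian m p.2)]
  have hGtr : ∀ p q, Matrix.trace (G p * (G q)ᴴ) = if p = q then 1 else 0 := by
    intro p q
    unfold G
    rw [kronecker_conjTranspose', ← Matrix.mul_kronecker_mul, Matrix.trace_kronecker,
      hermBasis_trace, hermBasis_trace]
    by_cases h1 : p.1 = q.1 <;> by_cases h2 : p.2 = q.2 <;> simp [h1, h2, Prod.ext_iff]
  -- orthonormal family in Euclidean space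
  set w : (Fin k × Fin k) × (Fin m × Fin m) →
      EuclideanSpace ℂ ((Fin k × Fin m) × (Fin k × Fin m)) :=
    fun p => matEquiv _ (G p) with hw
  have hwon : Orthonormal ℂ w := by
    rw [orthonormal_iff_ite]
    intro p q
    unfold w
    rw [inner_matEquiv, hGtr]
    simp [eq_comm]
  -- expansion of A
  have hcard : Fintype.card ((Fin k × Fin k) × (Fin m × Fin m)) =
      Module.finrank ℂ (EuclideanSpace ℂ ((Fin k × Fin m) × (Fin k × Fin m))) := by
    simp [Fintype.card_prod]
    ring
  have hexp := orthonormal_expansion hwon hcard (matEquiv _ A)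
  set cC : (Fin k × Fin k) × (Fin m × Fin m) → ℂ :=
    fun p => Matrix.trace (A * (G p)ᴴ) with hcC
  have hAexp : A = ∑ p, cC p • G p := by
    apply (matEquiv _).injective
    rw [map_sum, hexp]
    exact Finset.sum_congr rfl fun p _ => by rw [_root_.map_smul, inner_matEquiv]
  -- coefficients are real
  have hreal : ∀ p, ((cC p).re : ℂ) = cC p := by
    intro p
    rw [← Complex.conj_eq_iff_re]
    unfold cC
    calc (starRingEnd ℂ) (Matrix.trace (A * (G p)ᴴ))
        = Matrix.trace ((A * (G p)ᴴ)ᴴ) := by rw [Matrix.trace_conjTranspose]; rfl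
      _ = Matrix.trace ((G p)ᴴᴴ * Aᴴ) := by rw [Matrix.conjTranspose_mul]
      _ = Matrix.trace (G p * A) := by rw [Matrix.conjTranspose_conjTranspose, hA.eq]
      _ = Matrix.trace (A * G p) := Matrix.trace_mul_comm _ _
      _ = Matrix.trace (A * (G p)ᴴ) := by rw [(hGherm p).eq]
  set r : Matrix (Fin k × Fin k) (Fin m × Fin m) ℝ :=
    Matrix.of (fun a b => (cC (a, b)).re) with hr
  -- real SVD
  obtain ⟨n, lam, u, v, hlam, huon, hvon, hsvd⟩ :=
    real_svd (Matrix.toEuclideanLin r)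
  have hentry : ∀ a b, r a b = ∑ i, lam i * v i b * u i a := by
    intro a b
    have h := congrArg (fun f => f a) (hsvd (EuclideanSpace.single b 1))
    have hL : (Matrix.toEuclideanLin r) (EuclideanSpace.single b (1:ℝ)) a = r a b := by
      rw [Matrix.toEuclideanLin_apply]
      show (r *ᵥ (WithLp.equiv 2 _) (EuclideanSpace.single b (1:ℝ))) a = r a b
      have : (WithLp.equiv 2 ((Fin m × Fin m) → ℝ)) (EuclideanSpace.single b (1:ℝ)) =
          Pi.single b 1 := rfl
      rw [this, Matrix.mulVec_single]
      simp
    rw [hL] at h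
    rw [h]
    have hsum : (∑ i, (lam i * ⟪v i, EuclideanSpace.single b (1:ℝ)⟫) • u i) a =
        ∑ i, (lam i * ⟪v i, EuclideanSpace.single b (1:ℝ)⟫) * u i a :=
      by rw [WithLp.ofLp_sum]; simp
    rw [hsum]
    refine Finset.sum_congr rfl fun i _ => ?_
    rw [EuclideanSpace.inner_single_right]
    simp [mul_comm, mul_assoc, mul_left_comm]
  -- define the Hermitian factors
  set γ : Fin n → Matrix (Fin k) (Fin k) ℂ :=
    fun i => ∑ a, ((u i a : ℝ) : ℂ) • hermBasis k a with hγ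
  set δm : Fin n → Matrix (Fin m) (Fin m) ℂ :=
    fun i => ∑ b, ((v i b : ℝ) : ℂ) • hermBasis m b with hδm
  have hγconj : ∀ i, (γ i)ᴴ = γ i := by
    intro i
    unfold γ
    rw [Matrix.conjTranspose_sum]
    exact Finset.sum_congr rfl fun a _ => by
      rw [Matrix.conjTranspose_smul, (hermBasis_isHermitian k a).eq, Complex.star_def,
        Complex.conj_ofReal]
  have hδconj : ∀ i, (δm i)ᴴ = δm i := by
    intro i
    unfold δm
    rw [Matrix.conjTranspose_sum]
    exact Finset.sum_congr rfl fun b _ => by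
      rw [Matrix.conjTranspose_smul, (hermBasis_isHermitian m b).eq, Complex.star_def,
        Complex.conj_ofReal]
  -- trace orthonormality helper
  have key : ∀ {N : ℕ} (x y : EuclideanSpace ℝ (Fin N × Fin N)),
      Matrix.trace ((∑ a, ((x a : ℝ) : ℂ) • hermBasis N a) *
        (∑ a, ((y a : ℝ) : ℂ) • hermBasis N a)ᴴ) = ((⟪y, x⟫ : ℝ) : ℂ) := by
    intro N x y
    have hyc : (∑ a, ((y a : ℝ) : ℂ) • hermBasis N a)ᴴ = ∑ a, ((y a : ℝ) : ℂ) • hermBasis N a := by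
      rw [Matrix.conjTranspose_sum]
      exact Finset.sum_congr rfl fun a _ => by
        rw [Matrix.conjTranspose_smul, (hermBasis_isHermitian N a).eq, Complex.star_def,
          Complex.conj_ofReal]
    rw [hyc, Finset.sum_mul_sum]
    rw [Matrix.trace_sum]
    have : ∀ a, Matrix.trace (∑ c, (((x a : ℝ) : ℂ) • hermBasis N a) *
        (((y c : ℝ) : ℂ) • hermBasis N c)) = (x a : ℂ) * (y a : ℂ) := by
      intro a
      rw [Matrix.trace_sum]
      have : ∀ c, Matrix.trace ((((x a : ℝ) : ℂ) • hermBasis N a) *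
          (((y c : ℝ) : ℂ) • hermBasis N c)) =
          ((x a : ℂ) * (y c : ℂ)) * if a = c then 1 else 0 := by
        intro c
        rw [smul_mul_assoc, mul_smul_comm, Matrix.trace_smul, Matrix.trace_smul]
        have := hermBasis_trace N a c
        rw [(hermBasis_isHermitian N c).eq] at this
        rw [this]
        simp only [smul_eq_mul]
        ring
      rw [Finset.sum_congr rfl fun c _ => this c]
      simp [Finset.sum_ite_eq]
    rw [Finset.sum_congr rfl fun a _ => this a]
    have hin : (⟪y, x⟫ : ℝ) = ∑ a, y a * x a := by
      rw [PiLp.inner_apply]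
      exact Finset.sum_congr rfl fun a _ => by simp [RCLike.inner_apply, mul_comm]
    rw [hin]
    push_cast
    exact Finset.sum_congr rfl fun a _ => by ring
  refine ⟨n, lam, γ, δm, hlam, fun i => hγconj i, fun i => hδconj i, ?_, ?_, ?_⟩
  · intro i j
    simp only [hγ]
    rw [key (u i) (u j), orthonormal_iff_ite.mp huon j i]
    by_cases h : i = j <;> simp [h, eq_comm]
  · intro i j
    simp only [hδm]
    rw [key (v i) (v j), orthonormal_iff_ite.mp hvon j i]
    by_cases h : i = j <;> simp [h, eq_comm]
  · rw [hAexp]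
    have hkron : ∀ i, (γ i) ⊗ₖ (δm i) =
        ∑ a, ∑ b, (((u i a : ℝ) : ℂ) * ((v i b : ℝ) : ℂ)) • (hermBasis k a ⊗ₖ hermBasis m b) := by
      intro i
      unfold γ δm
      ext ⟨i1, i2⟩ ⟨j1, j2⟩
      simp only [Matrix.kroneckerMap_apply, Matrix.sum_apply, Matrix.smul_apply,
        smul_eq_mul, Finset.sum_mul, Finset.mul_sum]
      rw [Finset.sum_comm]
      exact Finset.sum_congr rfl fun a _ => Finset.sum_congr rfl fun b _ => by ring
    calc ∑ p, cC p • G p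
        = ∑ a, ∑ b, cC (a, b) • G (a, b) := by rw [Fintype.sum_prod_type]
      _ = ∑ a, ∑ b, (∑ i, ((lam i * v i b * u i a : ℝ) : ℂ)) • G (a, b) := by
          refine Finset.sum_congr rfl fun a _ => Finset.sum_congr rfl fun b _ => ?_
          congr 1
          rw [← hreal (a, b)]
          show ((r a b : ℝ) : ℂ) = _
          rw [hentry a b]
          push_cast
          rfl
      _ = ∑ a, ∑ b, ∑ i, ((lam i * v i b * u i a : ℝ) : ℂ) • G (a, b) := by
          refine Finset.sum_congr rfl fun a _ => Finset.sum_congr rfl fun b _ => ?_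
          rw [Finset.sum_smul]
      _ = ∑ a, ∑ i, ∑ b, ((lam i * v i b * u i a : ℝ) : ℂ) • G (a, b) :=
          Finset.sum_congr rfl fun a _ => Finset.sum_comm
      _ = ∑ i, ∑ a, ∑ b, ((lam i * v i b * u i a : ℝ) : ℂ) • G (a, b) := Finset.sum_comm
      _ = ∑ i, (lam i : ℂ) • (γ i ⊗ₖ δm i) := by
          refine Finset.sum_congr rfl fun i _ => ?_
          rw [hkron i, Finset.smul_sum]
          refine Finset.sum_congr rfl fun a _ => ?_
          rw [Finset.smul_sum]
          refine Finset.sum_congr rfl fun b _ => ?_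
          rw [smul_smul]
          unfold G
          congr 1
          push_cast
          ring
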